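/- Let X be a biquandle and let C_n^{BD}(X) ⊆ C_n^{BR}(X) be the subgroup generated by n-tuples (x_1,…,x_n) with x_i = x_{i+1} for some 1 ≤ i ≤ n−1 (for n ≥ 2; zero otherwise). Then ∂_n(C_n^{BD}(X)) ⊆ C_{n−1}^{BD}(X); i.e., the degenerate chains form a subcomplex of the birack chain complex. In particular, ∂_3(x, x, y) and ∂_3(x, y, y) lie in C_2^{BD}(X) for all x, y ∈ X. -/

import Mathlib

/-- A biquandle: a set with two binary operations `ul` (x ▷̲ y) and `ol` (x ▷̄ y)
satisfying the biquandle axioms (B1)-(B4). -/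
structure Biquandle (X : Type*) where
  ul : X → X → X
  ol : X → X → X
  b1 : ∀ x, ul x x = ol x x
  b2u : ∀ y, Function.Bijective fun x => ul x y
  b2o : ∀ y, Function.Bijective fun x => ol x y
  b3 : Function.Bijective (fun p : X × X => (ol p.2 p.1, ul p.1 p.2))
  b4a : ∀ x y z, ul (ul x y) (ul z y) = ul (ul x z) (ol y z)
  b4b : ∀ x y z, ol (ul x y) (ul z y) = ul (ol x z) (ol y z)
  b4c : ∀ x y z, ol (ol x y) (ol z y) = ol (ol x z) (ul y z)

/-- The birack boundary map ∂ : C_{n+1}^{BR}(X) → C_n^{BR}(X) on the free abelian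
groups on tuples, given by
∂(x_1,…,x_m) = Σ_i (-1)^i [(x_1,…,x̂_i,…,x_m) - (x_1 ▷̲ x_i,…,x_{i-1} ▷̲ x_i, x_{i+1} ▷̄ x_i,…,x_m ▷̄ x_i)],
and ∂ = 0 in degrees ≤ 1. -/
noncomputable def bqBoundary {X : Type*} (B : Biquandle X) (n : ℕ) :
    FreeAbelianGroup (Fin (n + 1) → X) →+ FreeAbelianGroup (Fin n → X) :=
  if n = 0 then 0 else
  FreeAbelianGroup.lift fun x : Fin (n + 1) → X =>
    ∑ i : Fin (n + 1), ((-1 : ℤ) ^ ((i : ℕ) + 1)) •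
      (FreeAbelianGroup.of (x ∘ i.succAbove) -
       FreeAbelianGroup.of (fun j : Fin n =>
         if ((i.succAbove j : Fin (n + 1)) : ℕ) < (i : ℕ)
           then B.ul (x (i.succAbove j)) (x i)
           else B.ol (x (i.succAbove j)) (x i)))

/-- The subgroup C_n^{BD}(X) of degenerate chains, generated by tuples with two
equal consecutive entries. -/
def degen (X : Type*) (n : ℕ) : AddSubgroup (FreeAbelianGroup (Fin n → X)) :=
  AddSubgroup.closure {c | ∃ x : Fin n → X,
    (∃ i j : Fin n, (i : ℕ) + 1 = (j : ℕ) ∧ x i = x j) ∧ c = FreeAbelianGroup.of x}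

lemma succAbove_val (m : ℕ) (k : Fin (m+2)) (j : Fin (m+1)) :
    ((k.succAbove j : Fin (m+2)) : ℕ) = if (j:ℕ) < (k:ℕ) then (j:ℕ) else (j:ℕ)+1 := by
  unfold Fin.succAbove
  split_ifs with h h' h' <;> simp_all [Fin.lt_def]

lemma of_mem_degen {X : Type*} {n : ℕ} (y : Fin n → X)
    (h : ∃ i j : Fin n, (i : ℕ) + 1 = (j : ℕ) ∧ y i = y j) :
    FreeAbelianGroup.of y ∈ degen X n :=
  AddSubgroup.subset_closure ⟨y, h, rfl⟩

lemma key {X : Type*} (B : Biquandle X) (n : ℕ) (x : Fin (n+1) → X)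
    (p q : Fin (n+1)) (hpq : (p:ℕ)+1 = (q:ℕ)) (hx : x p = x q) :
    bqBoundary B n (FreeAbelianGroup.of x) ∈ degen X n := by
  match n with
  | 0 => exact absurd hpq (by omega)
  | (m+1) =>
  have hq : (q:ℕ) < m + 2 := q.isLt
  have hp1 : (p:ℕ) < m + 1 := by omega
  rw [bqBoundary, if_neg (Nat.succ_ne_zero m), FreeAbelianGroup.lift_apply_of]
  set T : Fin (m+2) → (Fin (m+1) → X) := fun k j =>
    if ((k.succAbove j : Fin (m+2)) : ℕ) < (k : ℕ)
      then B.ul (x (k.succAbove j)) (x k)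
      else B.ol (x (k.succAbove j)) (x k) with hT
  set g : Fin (m+2) → FreeAbelianGroup (Fin (m+1) → X) := fun k =>
    ((-1:ℤ)^((k:ℕ)+1)) • (FreeAbelianGroup.of (x ∘ k.succAbove) -
      FreeAbelianGroup.of (T k)) with hg
  show ∑ k, g k ∈ degen X (m+1)
  have hpq' : p ≠ q := Fin.ne_of_val_ne (by omega)
  rw [← Finset.sum_sdiff (Finset.subset_univ {p, q})]
  have hidx : ∀ (a : ℕ) (ha : a < m + 2) (k : Fin (m+2)) (j : Fin (m+1)),
      (j : ℕ) = (if a ≤ (k:ℕ) ∧ a ≠ 0 then a - 1 else a) → ¬((j:ℕ) < (k:ℕ) ↔ a < (k:ℕ)) →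
      True := fun _ _ _ _ _ _ => trivial
  -- face/twist index computations
  have hsuccAbove : ∀ (k : Fin (m+2)) (j : Fin (m+1)) (a : Fin (m+2)),
      ((if (j:ℕ) < (k:ℕ) then (j:ℕ) else (j:ℕ)+1) = (a:ℕ)) → k.succAbove j = a := by
    intro k j a h
    apply Fin.ext
    rw [succAbove_val]
    exact h
  have hpair : ∑ k ∈ ({p, q} : Finset (Fin (m+2))), g k = 0 := by
    rw [Finset.sum_pair hpq']
    have hface : x ∘ p.succAbove = x ∘ q.succAbove := by
      funext j
      simp only [Function.comp_apply]
      rcases lt_trichotomy ((j:ℕ)) ((p:ℕ)) with h | h | h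
      · rw [hsuccAbove p j ⟨j, by omega⟩ (by simp [h]),
            hsuccAbove q j ⟨j, by omega⟩ (by simp; omega)]
      · rw [hsuccAbove p j q (by simp [h]; omega),
            hsuccAbove q j p (by rw [if_pos (by omega)]; omega), hx]
      · rw [hsuccAbove p j ⟨j+1, by omega⟩ (by simp; omega),
            hsuccAbove q j ⟨j+1, by omega⟩ (by simp; omega)]
    have htw : T p = T q := by
      funext j
      simp only [hT]
      rcases lt_trichotomy ((j:ℕ)) ((p:ℕ)) with h | h | h
      · rw [hsuccAbove p j ⟨j, by omega⟩ (by simp [h]),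
            hsuccAbove q j ⟨j, by omega⟩ (by simp; omega)]
        rw [if_pos (by simpa using h), if_pos (by simp; omega)]
        rw [show x p = x q from hx]
      · rw [hsuccAbove p j q (by simp [h]; omega),
            hsuccAbove q j p (by rw [if_pos (by omega)]; omega)]
        rw [if_neg (by omega), if_pos (by omega)]
        simp only [hx]
        exact (B.b1 _).symm
      · rw [hsuccAbove p j ⟨j+1, by omega⟩ (by simp; omega),
            hsuccAbove q j ⟨j+1, by omega⟩ (by simp; omega)]
        rw [if_neg (by simp; omega), if_neg (by simp; omega)]
        rw [show x p = x q from hx]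
    simp only [hg, hface, htw, ← hpq]
    rw [← add_smul]
    have h0 : ((-1:ℤ)^((p:ℕ)+1) + (-1:ℤ)^((p:ℕ)+1+1)) = 0 := by
      rw [pow_succ (-1:ℤ) ((p:ℕ)+1)]; ring
    rw [h0, zero_smul]
  rw [hpair, add_zero]
  apply sum_mem
  intro k hk
  simp only [Finset.mem_sdiff, Finset.mem_insert, Finset.mem_singleton, not_or] at hk
  obtain ⟨-, hkp, hkq⟩ := hk
  have hkp' : (k:ℕ) ≠ (p:ℕ) := fun h => hkp (Fin.ext h)
  have hkq' : (k:ℕ) ≠ (q:ℕ) := fun h => hkq (Fin.ext h)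
  apply zsmul_mem
  apply sub_mem
  · -- face
    rcases lt_or_gt_of_ne hkp' with h | h
    · -- k < p : witnesses p-1, p
      refine of_mem_degen _ ⟨⟨(p:ℕ)-1, by omega⟩, ⟨(p:ℕ), by omega⟩, by simp; omega, ?_⟩
      simp only [Function.comp_apply]
      rw [hsuccAbove k _ p (by rw [if_neg (by simp; omega)]; simp; omega),
          hsuccAbove k _ q (by rw [if_neg (by simp; omega)]; simp; omega), hx]
    · -- k > p, k ≠ q so k > q : witnesses p, p+1
      refine of_mem_degen _ ⟨⟨(p:ℕ), by omega⟩, ⟨(p:ℕ)+1, by omega⟩, by simp, ?_⟩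
      simp only [Function.comp_apply]
      rw [hsuccAbove k _ p (by rw [if_pos (by simpa using h)]),
          hsuccAbove k _ q (by rw [if_pos (by simp; omega)]; simp; omega), hx]
  · -- twist
    rcases lt_or_gt_of_ne hkp' with h | h
    · refine of_mem_degen _ ⟨⟨(p:ℕ)-1, by omega⟩, ⟨(p:ℕ), by omega⟩, by simp; omega, ?_⟩
      simp only [hT]
      rw [hsuccAbove k _ p (by rw [if_neg (by simp; omega)]; simp; omega),
          hsuccAbove k _ q (by rw [if_neg (by simp; omega)]; simp; omega)]
      rw [if_neg (by omega), if_neg (by omega), hx]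
    · refine of_mem_degen _ ⟨⟨(p:ℕ), by omega⟩, ⟨(p:ℕ)+1, by omega⟩, by simp, ?_⟩
      simp only [hT]
      rw [hsuccAbove k _ p (by rw [if_pos (by simpa using h)]),
          hsuccAbove k _ q (by rw [if_pos (by simp; omega)]; simp; omega)]
      rw [if_pos (by omega), if_pos (by omega), hx]

/-- The degenerate chains form a subcomplex of the birack chain complex:
∂(C_n^{BD}) ⊆ C_{n-1}^{BD}; in particular ∂₃(x,x,y) and ∂₃(x,y,y) are degenerate. -/
theorem degen_subcomplex {X : Type*} (B : Biquandle X) :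
    (∀ (n : ℕ) (c : FreeAbelianGroup (Fin (n + 1) → X)),
      c ∈ degen X (n + 1) → bqBoundary B n c ∈ degen X n) ∧
    ∀ x y : X,
      bqBoundary B 2 (FreeAbelianGroup.of ![x, x, y]) ∈ degen X 2 ∧
      bqBoundary B 2 (FreeAbelianGroup.of ![x, y, y]) ∈ degen X 2 := by
  have main : ∀ (n : ℕ) (c : FreeAbelianGroup (Fin (n + 1) → X)),
      c ∈ degen X (n + 1) → bqBoundary B n c ∈ degen X n := by
    intro n c hc
    have hle : degen X (n+1) ≤ (degen X n).comap (bqBoundary B n) := by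
      rw [degen]
      apply (AddSubgroup.closure_le _).mpr
      rintro c ⟨x, ⟨i, j, hij, hx⟩, rfl⟩
      exact key B n x i j hij hx
    exact hle hc
  refine ⟨main, fun x y => ⟨?_, ?_⟩⟩
  · exact main 2 _ (of_mem_degen _ ⟨0, 1, by decide, by simp⟩)
  · exact main 2 _ (of_mem_degen _ ⟨1, 2, by decide, by simp⟩)
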